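/- With the purely imaginary parameter setting of the context, let S be the (n+1)×(n+1) complex matrix whose columns are ξ_0, ξ_1, …, ξ_n. Then det(S) = (−1/ζ)^{n(n+1)/2}·∏_{j=1}^n (sin ω_j)^j, and in particular det(S) ≠ 0, so ξ_0, ξ_1, …, ξ_n form a basis of ℂ^{n+1}. -/

import Mathlib

open Complex Matrix Finset

noncomputable section

/-- Index type for `(n+1)×(n+1)` matrices: a `1`-block plus an `n`-block. -/
abbrev Idx (n : ℕ) := Fin 1 ⊕ Fin n

/-- `ζ = 2·Im(λ0)/(n+1)`. -/
def zeta (n : ℕ) (l0 : ℂ) : ℝ := 2 * l0.im / (n + 1)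

/-- `ω_j = jπ/(n+1)`. -/
def om (n j : ℕ) : ℝ := j * Real.pi / (n + 1)

/-- `a_j = ζ·csc(ω_j)` for `j = 1,…,n` (indexed by `j : Fin n` as `j+1`). -/
def aa (n : ℕ) (l0 : ℂ) (j : Fin n) : ℝ := zeta n l0 / Real.sin (om n ((j : ℕ) + 1))

/-- `b_j = ζ·cot(ω_j) − 2·Re(λ0)` for `j = 1,…,n`. -/
def bb (n : ℕ) (l0 : ℂ) (j : Fin n) : ℝ :=
  zeta n l0 * (Real.cos (om n ((j : ℕ) + 1)) / Real.sin (om n ((j : ℕ) + 1))) - 2 * l0.re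

/-- `z0 = 2·Re(λ0) + i·ζ`. -/
def zz0 (n : ℕ) (l0 : ℂ) : ℂ := 2 * l0.re + Complex.I * zeta n l0

/-- The `(n+1)×(n+1)` matrix `B` with `(1,1)` entry `i·n·ζ`, first row/column entries `a_j`,
diagonal entries `−(z0 + b_j)` and all other entries `0`. -/
def Bmat (n : ℕ) (l0 : ℂ) : Matrix (Idx n) (Idx n) ℂ :=
  Matrix.fromBlocks
    (Matrix.of fun _ _ => Complex.I * n * zeta n l0)
    (Matrix.of fun _ j => (aa n l0 j : ℂ))
    (Matrix.of fun i _ => (aa n l0 i : ℂ))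
    (Matrix.diagonal fun j => -(zz0 n l0 + (bb n l0 j : ℂ)))

/-- The vector `ξ_0 = (1, a_1/(z0+b_1), …, a_n/(z0+b_n))ᵀ`. -/
def xi0 (n : ℕ) (l0 : ℂ) : Idx n → ℂ :=
  Sum.elim (fun _ => 1)
    (fun k : Fin n => (aa n l0 k : ℂ) / (zz0 n l0 + (bb n l0 k : ℂ)))

/-- The vector `ξ_m = (0, a_1/(iζ+b_1)^{m+1}, …, a_n/(iζ+b_n)^{m+1})ᵀ` for `m ≥ 1`. -/
def xiv (n : ℕ) (l0 : ℂ) (m : ℕ) : Idx n → ℂ :=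
  Sum.elim (fun _ => 0)
    (fun k : Fin n => (aa n l0 k : ℂ) / (Complex.I * zeta n l0 + (bb n l0 k : ℂ)) ^ (m + 1))

/-- The matrix `S` whose columns are `ξ_0, ξ_1, …, ξ_n`. -/
def Smat (n : ℕ) (l0 : ℂ) : Matrix (Idx n) (Idx n) ℂ :=
  Matrix.of fun r c =>
    Sum.elim (fun _ : Fin 1 => xi0 n l0 r) (fun j : Fin n => xiv n l0 ((j : ℕ) + 1) r) c


/- ### Auxiliary lemmas -/
lemma zeta_ne {n : ℕ} {l0 : ℂ} (him : l0.im ≠ 0) : zeta n l0 ≠ 0 := by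
  unfold zeta
  have h1 : (n:ℝ) + 1 ≠ 0 := by positivity
  exact div_ne_zero (by simpa using him) h1

lemma om_pos {n : ℕ} (j : Fin n) : 0 < om n ((j:ℕ)+1) := by
  unfold om
  have := Real.pi_pos
  positivity

lemma om_lt_pi {n : ℕ} (j : Fin n) : om n ((j:ℕ)+1) < Real.pi := by
  unfold om
  rw [div_lt_iff₀ (by positivity)]
  have hj : ((j:ℕ):ℝ) < (n:ℝ) := by exact_mod_cast j.2
  push_cast
  nlinarith [Real.pi_pos]

lemma sin_om_pos {n : ℕ} (j : Fin n) : 0 < Real.sin (om n ((j:ℕ)+1)) :=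
  Real.sin_pos_of_pos_of_lt_pi (om_pos j) (om_lt_pi j)

lemma sin_om_ne {n : ℕ} (j : Fin n) : Real.sin (om n ((j:ℕ)+1)) ≠ 0 := (sin_om_pos j).ne'

def Xv (n : ℕ) (l0 : ℂ) (j : Fin n) : ℂ :=
  (Real.sin (om n ((j:ℕ)+1)) : ℂ) * Complex.exp (-(om n ((j:ℕ)+1) : ℂ) * Complex.I) / (zeta n l0 : ℂ)

lemma denom_eq {n : ℕ} {l0 : ℂ} (hre : l0.re = 0) (j : Fin n) :
    Complex.I * (zeta n l0 : ℂ) + (bb n l0 j : ℂ) =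
      (zeta n l0 : ℂ) * Complex.exp ((om n ((j:ℕ)+1) : ℂ) * Complex.I) /
        (Real.sin (om n ((j:ℕ)+1)) : ℂ) := by
  have hw : bb n l0 j = zeta n l0 * (Real.cos (om n ((j:ℕ)+1)) / Real.sin (om n ((j:ℕ)+1))) := by
    unfold bb; rw [hre]; ring
  set w := om n ((j:ℕ)+1) with hwdef
  have hs : Complex.sin (w:ℂ) ≠ 0 := by
    rw [← Complex.ofReal_sin]; exact_mod_cast sin_om_ne j
  rw [hw, Complex.exp_mul_I]
  push_cast
  field_simp
  ring

lemma denom_mul_Xv {n : ℕ} {l0 : ℂ} (hre : l0.re = 0) (him : l0.im ≠ 0) (j : Fin n) :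
    (Complex.I * (zeta n l0 : ℂ) + (bb n l0 j : ℂ)) * Xv n l0 j = 1 := by
  have hs : (Real.sin (om n ((j:ℕ)+1)) : ℂ) ≠ 0 := by exact_mod_cast sin_om_ne j
  have hz : ((zeta n l0 : ℝ) : ℂ) ≠ 0 := by exact_mod_cast zeta_ne him
  rw [denom_eq hre j, Xv]
  rw [div_mul_div_comm]
  have h1 : (zeta n l0 : ℂ) * Complex.exp ((om n ((j:ℕ)+1) : ℂ) * Complex.I) *
      ((Real.sin (om n ((j:ℕ)+1)) : ℂ) * Complex.exp (-(om n ((j:ℕ)+1) : ℂ) * Complex.I)) =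
      ((Real.sin (om n ((j:ℕ)+1)) : ℂ) * (zeta n l0 : ℂ)) *
      (Complex.exp ((om n ((j:ℕ)+1) : ℂ) * Complex.I) * Complex.exp (-(om n ((j:ℕ)+1) : ℂ) * Complex.I)) := by
    ring
  rw [h1, ← Complex.exp_add]
  have h2 : (om n ((j:ℕ)+1) : ℂ) * Complex.I + -(om n ((j:ℕ)+1) : ℂ) * Complex.I = 0 := by ring
  rw [h2, Complex.exp_zero, mul_one, div_self (mul_ne_zero hs hz)]

lemma inv_denom {n : ℕ} {l0 : ℂ} (hre : l0.re = 0) (him : l0.im ≠ 0) (j : Fin n) :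
    (Complex.I * (zeta n l0 : ℂ) + (bb n l0 j : ℂ))⁻¹ = Xv n l0 j :=
  inv_eq_of_mul_eq_one_right (denom_mul_Xv hre him j)

lemma zz0_eq {n : ℕ} {l0 : ℂ} (hre : l0.re = 0) : zz0 n l0 = Complex.I * (zeta n l0 : ℂ) := by
  unfold zz0; rw [hre]; push_cast; ring

lemma Smat_eq {n : ℕ} {l0 : ℂ} (hre : l0.re = 0) (him : l0.im ≠ 0) :
    Smat n l0 = Matrix.fromBlocks (Matrix.of fun (_ _ : Fin 1) => (1:ℂ)) 0
      (Matrix.of fun (k : Fin n) (_ : Fin 1) => (aa n l0 k : ℂ) * Xv n l0 k)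
      (Matrix.of fun (k j : Fin n) => (aa n l0 k : ℂ) * Xv n l0 k ^ ((j:ℕ)+2)) := by
  ext r c
  rcases r with r | k <;> rcases c with c | j
  · simp [Smat, xi0]
  · simp [Smat, xiv]
  · simp only [Smat, Matrix.of_apply, Sum.elim_inl, Sum.elim_inr,
      Matrix.fromBlocks_apply₂₁, xi0]
    rw [zz0_eq hre, div_eq_mul_inv, inv_denom hre him]
  · simp only [Smat, Matrix.of_apply, Sum.elim_inr, Matrix.fromBlocks_apply₂₂, xiv]
    rw [div_eq_mul_inv, ← inv_pow, inv_denom hre him]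

lemma det_S {n : ℕ} {l0 : ℂ} (hre : l0.re = 0) (him : l0.im ≠ 0) :
    (Smat n l0).det = (∏ k, (aa n l0 k : ℂ) * Xv n l0 k ^ 2) *
      ∏ i, ∏ j ∈ Ioi i, (Xv n l0 j - Xv n l0 i) := by
  rw [Smat_eq hre him, Matrix.det_fromBlocks_zero₁₂]
  have h1 : (Matrix.of fun (_ _ : Fin 1) => (1:ℂ)).det = 1 := by
    simp [Matrix.det_fin_one]
  rw [h1, one_mul]
  have h2 : (Matrix.of fun (k j : Fin n) => (aa n l0 k : ℂ) * Xv n l0 k ^ ((j:ℕ)+2)) =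
      Matrix.of fun (k j : Fin n) => ((aa n l0 k : ℂ) * Xv n l0 k ^ 2) * (Matrix.vandermonde (Xv n l0)) k j := by
    ext k j
    simp only [Matrix.of_apply, Matrix.vandermonde_apply]
    ring
  rw [h2, Matrix.det_mul_column, Matrix.det_vandermonde]



-- Gauss
lemma gauss (n : ℕ) : (∑ k ∈ range n, (k+1)) = n*(n+1)/2 := by
  have h := Finset.sum_range_succ' (fun i => i) n
  simp only [add_zero] at h
  rw [show (∑ k ∈ range n, (k+1)) = ∑ i ∈ range (n+1), i from h.symm,
    Finset.sum_range_id]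
  simp [Nat.mul_comm]

lemma sum_w (n : ℕ) : ∑ k : Fin n, om n ((k:ℕ)+1) = (n*(n+1)/2 : ℕ) * Real.pi / (n+1) := by
  unfold om
  rw [← Finset.sum_div, ← Finset.sum_mul, Fin.sum_univ_eq_sum_range (fun k => ((k+1 : ℕ):ℝ))]
  congr 2
  rw [← gauss n]
  push_cast
  ring

-- cardinality of the triangle
lemma card_T (n : ℕ) : ((univ : Finset (Fin n)).sigma fun i => Ioi i).card = n*(n-1)/2 := by
  rw [Finset.card_sigma]
  simp only [Fin.card_Ioi]
  rw [Fin.sum_univ_eq_sum_range (fun i => n - 1 - i)]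
  rw [show (∑ i ∈ range n, (n - 1 - i)) = ∑ i ∈ range n, i from Finset.sum_range_reflect (fun i => i) n]
  exact Finset.sum_range_id n

-- swap the triangle
lemma sum_snd (n : ℕ) (f : Fin n → ℝ) :
    (∑ p ∈ (univ : Finset (Fin n)).sigma fun i => Ioi i, f p.2)
      = ∑ p ∈ (univ : Finset (Fin n)).sigma fun i => Iio i, f p.1 := by
  apply Finset.sum_nbij' (fun p => ⟨p.2, p.1⟩) (fun p => ⟨p.2, p.1⟩)
  · intro p hp; simp only [Finset.mem_sigma, Finset.mem_univ, true_and, Finset.mem_Ioi, Finset.mem_Iio] at *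
    exact hp
  · intro p hp; simp only [Finset.mem_sigma, Finset.mem_univ, true_and, Finset.mem_Ioi, Finset.mem_Iio] at *
    exact hp
  · intro p hp; rfl
  · intro p hp; rfl
  · intro p hp; rfl

lemma sum_T (n : ℕ) (hn : 1 ≤ n) :
    (∑ p ∈ (univ : Finset (Fin n)).sigma fun i => Ioi i, (om n ((p.1:ℕ)+1) + om n ((p.2:ℕ)+1)))
      = ((n:ℝ) - 1) * ∑ k : Fin n, om n ((k:ℕ)+1) := by
  rw [Finset.sum_add_distrib, sum_snd n (fun k => om n ((k:ℕ)+1))]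
  rw [Finset.sum_sigma, Finset.sum_sigma]
  simp only [Finset.sum_const, nsmul_eq_mul, Fin.card_Ioi, Fin.card_Iio]
  rw [← Finset.sum_add_distrib, Finset.mul_sum]
  apply Finset.sum_congr rfl
  intro i _
  have hi := i.2
  have h1 : ((n - 1 - (i:ℕ) : ℕ) : ℝ) = (n:ℝ) - 1 - (i:ℕ) := by
    push_cast [Nat.cast_sub (by omega : (i:ℕ) ≤ n - 1), Nat.cast_sub hn]
    ring
  rw [h1]
  ring

lemma om_reflect (n : ℕ) (i j : Fin n) (hij : (i:ℕ) < (j:ℕ)) :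
    Real.sin (om n ((j:ℕ)+1) - om n ((i:ℕ)+1)) = Real.sin (om n ((n + (i:ℕ) - (j:ℕ))+1)) := by
  have hj := j.2
  have h1 : om n ((j:ℕ)+1) - om n ((i:ℕ)+1) = (((j:ℕ):ℝ) - ((i:ℕ):ℝ))*Real.pi/(n+1) := by
    unfold om; push_cast; ring
  have h2 : om n ((n + (i:ℕ) - (j:ℕ))+1) = Real.pi - (((j:ℕ):ℝ) - ((i:ℕ):ℝ))*Real.pi/(n+1) := by
    unfold om
    have h3 : ((n + (i:ℕ) - (j:ℕ) + 1 : ℕ):ℝ) = (n:ℝ) + 1 - (((j:ℕ):ℝ) - ((i:ℕ):ℝ)) := by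
      push_cast [Nat.cast_sub (by omega : (j:ℕ) ≤ n + (i:ℕ))]; ring
    rw [h3]
    field_simp
  rw [h1, h2, Real.sin_pi_sub]

lemma prod_sin (n : ℕ) :
    (∏ p ∈ (univ : Finset (Fin n)).sigma fun i => Ioi i,
        ((Real.sin (om n ((p.2.val)+1) - om n ((p.1.val)+1)) : ℝ) : ℂ))
      = ∏ m : Fin n, ((Real.sin (om n ((m:ℕ)+1)) : ℝ) : ℂ)^(m:ℕ) := by
  have hrhs : ∀ m : Fin n, ((Real.sin (om n ((m:ℕ)+1)) : ℝ) : ℂ)^(m:ℕ)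
      = ∏ _i ∈ Iio m, ((Real.sin (om n ((m:ℕ)+1)) : ℝ) : ℂ) := by
    intro m; rw [Finset.prod_const, Fin.card_Iio]
  simp only [hrhs]
  rw [← Finset.prod_sigma (univ : Finset (Fin n)) (fun m => Iio m)
    (fun p => ((Real.sin (om n ((p.1.val)+1)) : ℝ) : ℂ))]
  have memT : ∀ p : (_ : Fin n) × Fin n, p ∈ ((univ : Finset (Fin n)).sigma fun i => Ioi i) →
      p.1.val < p.2.val := fun p hp =>
    Fin.lt_def.mp (Finset.mem_Ioi.mp (Finset.mem_sigma.mp hp).2)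
  have memT' : ∀ q : (_ : Fin n) × Fin n, q ∈ ((univ : Finset (Fin n)).sigma fun m => Iio m) →
      q.2.val < q.1.val := fun q hq =>
    Fin.lt_def.mp (Finset.mem_Iio.mp (Finset.mem_sigma.mp hq).2)
  refine Finset.prod_bij'
    (fun p hp => (⟨⟨n + p.1.val - p.2.val, by
        have h2 := memT p hp; have h3 := p.2.2; omega⟩, p.1⟩ : Σ _ : Fin n, Fin n))
    (fun q hq => (⟨q.2, ⟨n + q.2.val - q.1.val, by
        have h2 := memT' q hq; have h3 := q.1.2; omega⟩⟩ : Σ _ : Fin n, Fin n))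
    ?_ ?_ ?_ ?_ ?_
  · intro p hp
    have h2 := memT p hp; have h3 := p.2.2
    exact Finset.mem_sigma.mpr ⟨Finset.mem_univ _,
      Finset.mem_Iio.mpr (Fin.lt_def.mpr (by simp only [Fin.val_mk]; omega))⟩
  · intro q hq
    have h2 := memT' q hq; have h3 := q.1.2
    exact Finset.mem_sigma.mpr ⟨Finset.mem_univ _,
      Finset.mem_Ioi.mpr (Fin.lt_def.mpr (by simp only [Fin.val_mk]; omega))⟩
  · intro p hp
    have h2 := memT p hp; have h3 := p.2.2
    refine Sigma.ext rfl (heq_of_eq (Fin.ext ?_))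
    simp only [Fin.val_mk]
    omega
  · intro q hq
    have h2 := memT' q hq; have h3 := q.1.2
    refine Sigma.ext (Fin.ext ?_) (heq_of_eq rfl)
    simp only [Fin.val_mk]
    omega
  · intro p hp
    have h2 := memT p hp
    rw [om_reflect n p.1 p.2 h2]


lemma key2 (a b : ℂ) : Complex.sin b * Complex.exp (-b * I) - Complex.sin a * Complex.exp (-a * I)
    = Complex.exp (-(a+b) * I) * Complex.sin (b - a) := by
  simp only [Complex.sin]
  rw [show -b*I = -(b*I) by ring, show -a*I = -(a*I) by ring,
    show -(a+b)*I = -(a*I) + -(b*I) by ring, show -(b-a)*I = a*I + -(b*I) by ring,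
    show (b-a)*I = -(a*I) + b*I by ring, Complex.exp_add, Complex.exp_add, Complex.exp_add]
  simp only [Complex.exp_neg]
  field_simp [Complex.exp_ne_zero]
  ring

lemma Nsplit {n : ℕ} (hn : 1 ≤ n) : n*(n+1)/2 = n + n*(n-1)/2 := by
  obtain ⟨k, rfl⟩ : ∃ k, n = k + 1 := ⟨n - 1, by omega⟩
  simp only [Nat.add_sub_cancel]
  obtain ⟨t, ht⟩ := Nat.even_mul_succ_self k
  have h1 : (k+1)*k = t+t := by rw [mul_comm]; exact ht
  have h2 : (k+1)*(k+1+1) = t + t + 2*(k+1) := by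
    have h3 : (k+1)*(k+1+1) = k*(k+1) + 2*(k+1) := by ring
    rw [h3, ht]
  omega

lemma alg1 (z s E : ℂ) (hz : z ≠ 0) (hs : s ≠ 0) : z/s * (s*E/z)^2 = s*E^2/z := by
  field_simp

lemma prod_eval {n : ℕ} {l0 : ℂ} (hn : 1 ≤ n) (hre : l0.re = 0) (him : l0.im ≠ 0) :
    (∏ k, (aa n l0 k : ℂ) * Xv n l0 k ^ 2) *
      ∏ i, ∏ j ∈ Ioi i, (Xv n l0 j - Xv n l0 i)
    = (-1 / (zeta n l0 : ℂ)) ^ (n*(n+1)/2) *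
        ∏ j : Fin n, ((Real.sin (om n ((j:ℕ)+1)) : ℝ) : ℂ) ^ ((j:ℕ)+1) := by
  set N := n*(n+1)/2 with hN
  set T := ((univ : Finset (Fin n)).sigma fun i => Ioi i) with hT
  have hz : ((zeta n l0 : ℝ) : ℂ) ≠ 0 := by exact_mod_cast zeta_ne him
  have hsC : ∀ k : Fin n, ((Real.sin (om n ((k:ℕ)+1)) : ℝ) : ℂ) ≠ 0 := fun k => by
    exact_mod_cast sin_om_ne k
  -- pointwise identities
  have E1 : ∀ k : Fin n, (aa n l0 k : ℂ) * Xv n l0 k ^ 2 =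
      ((Real.sin (om n ((k:ℕ)+1)) : ℝ) : ℂ) *
        Complex.exp (-(2*((om n ((k:ℕ)+1) : ℝ) : ℂ))*I) / (zeta n l0 : ℂ) := by
    intro k
    have hE : Complex.exp (-((om n ((k:ℕ)+1) : ℝ) : ℂ)*I) ^ 2
        = Complex.exp (-(2*((om n ((k:ℕ)+1) : ℝ) : ℂ))*I) := by
      rw [sq, ← Complex.exp_add]; ring_nf
    have ha : ((aa n l0 k : ℝ) : ℂ)
        = ((zeta n l0 : ℝ):ℂ) / ((Real.sin (om n ((k:ℕ)+1)) : ℝ):ℂ) := by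
      unfold aa; exact Complex.ofReal_div _ _
    rw [ha, Xv, alg1 _ _ _ hz (hsC k), hE]
  have E2 : ∀ i j : Fin n, Xv n l0 j - Xv n l0 i =
      Complex.exp (-(((om n ((i:ℕ)+1) : ℝ) : ℂ) + ((om n ((j:ℕ)+1) : ℝ) : ℂ))*I) *
        ((Real.sin (om n ((j:ℕ)+1) - om n ((i:ℕ)+1)) : ℝ) : ℂ) / (zeta n l0 : ℂ) := by
    intro i j
    unfold Xv
    rw [div_sub_div_same]
    congr 1
    have hk := key2 ((om n ((i:ℕ)+1) : ℝ) : ℂ) ((om n ((j:ℕ)+1) : ℝ) : ℂ)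
    rw [Complex.ofReal_sin, Complex.ofReal_sin, Complex.ofReal_sin]
    push_cast
    exact hk
  -- exponent sums
  have h1 : (∑ k : Fin n, -(2*((om n ((k:ℕ)+1) : ℝ) : ℂ))*I)
      = ((-(2 * ∑ k : Fin n, om n ((k:ℕ)+1)) : ℝ) : ℂ) * I := by
    rw [← Finset.sum_mul]
    congr 1
    push_cast
    rw [Finset.mul_sum, ← Finset.sum_neg_distrib]
  have h2 : (∑ p ∈ T, -(((om n ((p.1:ℕ)+1) : ℝ) : ℂ) + ((om n ((p.2:ℕ)+1) : ℝ) : ℂ))*I)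
      = ((-(∑ p ∈ T, (om n ((p.1:ℕ)+1) + om n ((p.2:ℕ)+1))) : ℝ) : ℂ) * I := by
    rw [← Finset.sum_mul]
    congr 1
    push_cast
    rw [← Finset.sum_neg_distrib]
  have hreal : -(2 * ∑ k : Fin n, om n ((k:ℕ)+1))
      + -(∑ p ∈ T, (om n ((p.1:ℕ)+1) + om n ((p.2:ℕ)+1))) = -((N:ℝ) * Real.pi) := by
    rw [hT, sum_T n hn, sum_w n, hN]
    have hne : (n:ℝ) + 1 ≠ 0 := by positivity
    field_simp
    ring
  have hEE : Complex.exp (∑ k : Fin n, -(2*((om n ((k:ℕ)+1) : ℝ) : ℂ))*I) *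
      Complex.exp (∑ p ∈ T, -(((om n ((p.1:ℕ)+1) : ℝ) : ℂ) + ((om n ((p.2:ℕ)+1) : ℝ) : ℂ))*I)
      = (-1:ℂ)^N := by
    rw [← Complex.exp_add, h1, h2, ← add_mul, ← Complex.ofReal_add, hreal]
    have harg : ((-((N:ℝ) * Real.pi) : ℝ) : ℂ) * I = (N:ℂ) * (-(Real.pi * I)) := by
      push_cast; ring
    rw [harg, Complex.exp_nat_mul, Complex.exp_neg, Complex.exp_pi_mul_I]
    norm_num
  -- sine products
  have hps : (∏ p ∈ T, ((Real.sin (om n ((p.2:ℕ)+1) - om n ((p.1:ℕ)+1)) : ℝ) : ℂ))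
      = ∏ m : Fin n, ((Real.sin (om n ((m:ℕ)+1)) : ℝ) : ℂ)^(m:ℕ) := prod_sin n
  have hcomb : (∏ k : Fin n, ((Real.sin (om n ((k:ℕ)+1)) : ℝ) : ℂ)) *
      (∏ m : Fin n, ((Real.sin (om n ((m:ℕ)+1)) : ℝ) : ℂ)^(m:ℕ))
      = ∏ j : Fin n, ((Real.sin (om n ((j:ℕ)+1)) : ℝ) : ℂ) ^ ((j:ℕ)+1) := by
    rw [← Finset.prod_mul_distrib]
    exact Finset.prod_congr rfl fun j _ => (pow_succ' _ _).symm
  have hzpow : ((zeta n l0 : ℝ):ℂ)^n * ((zeta n l0 : ℝ):ℂ)^(n*(n-1)/2) = ((zeta n l0 : ℝ):ℂ)^N := by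
    rw [← pow_add, hN, Nsplit hn]
  -- assembling
  calc (∏ k, (aa n l0 k : ℂ) * Xv n l0 k ^ 2) *
      ∏ i, ∏ j ∈ Ioi i, (Xv n l0 j - Xv n l0 i)
      = (∏ k : Fin n, ((Real.sin (om n ((k:ℕ)+1)) : ℝ) : ℂ) *
          Complex.exp (-(2*((om n ((k:ℕ)+1) : ℝ) : ℂ))*I) / (zeta n l0 : ℂ)) *
        ∏ p ∈ T, (Complex.exp (-(((om n ((p.1:ℕ)+1) : ℝ) : ℂ) + ((om n ((p.2:ℕ)+1) : ℝ) : ℂ))*I) *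
          ((Real.sin (om n ((p.2:ℕ)+1) - om n ((p.1:ℕ)+1)) : ℝ) : ℂ) / (zeta n l0 : ℂ)) := by
        rw [hT, Finset.prod_sigma]
        exact congrArg₂ (· * ·) (Finset.prod_congr rfl fun k _ => E1 k)
          (Finset.prod_congr rfl fun i _ => Finset.prod_congr rfl fun j _ => E2 i j)
    _ = ((∏ k : Fin n, ((Real.sin (om n ((k:ℕ)+1)) : ℝ) : ℂ)) *
          Complex.exp (∑ k : Fin n, -(2*((om n ((k:ℕ)+1) : ℝ) : ℂ))*I) / (zeta n l0 : ℂ)^n) *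
        ((Complex.exp (∑ p ∈ T, -(((om n ((p.1:ℕ)+1) : ℝ) : ℂ) + ((om n ((p.2:ℕ)+1) : ℝ) : ℂ))*I)) *
          (∏ p ∈ T, ((Real.sin (om n ((p.2:ℕ)+1) - om n ((p.1:ℕ)+1)) : ℝ) : ℂ)) /
            (zeta n l0 : ℂ)^(n*(n-1)/2)) := by
        rw [Complex.exp_sum, Complex.exp_sum,
          Finset.prod_div_distrib, Finset.prod_div_distrib,
          Finset.prod_mul_distrib, Finset.prod_mul_distrib,
          Finset.prod_const, Finset.prod_const, Finset.card_univ, Fintype.card_fin,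
          card_T n]
    _ = (Complex.exp (∑ k : Fin n, -(2*((om n ((k:ℕ)+1) : ℝ) : ℂ))*I) *
          Complex.exp (∑ p ∈ T, -(((om n ((p.1:ℕ)+1) : ℝ) : ℂ) + ((om n ((p.2:ℕ)+1) : ℝ) : ℂ))*I)) *
        ((∏ k : Fin n, ((Real.sin (om n ((k:ℕ)+1)) : ℝ) : ℂ)) *
          (∏ p ∈ T, ((Real.sin (om n ((p.2:ℕ)+1) - om n ((p.1:ℕ)+1)) : ℝ) : ℂ)) /
          ((zeta n l0 : ℂ)^n * (zeta n l0 : ℂ)^(n*(n-1)/2))) := by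
        ring
    _ = (-1:ℂ)^N * ((∏ j : Fin n, ((Real.sin (om n ((j:ℕ)+1)) : ℝ) : ℂ) ^ ((j:ℕ)+1)) /
          (zeta n l0 : ℂ)^N) := by
        rw [hEE, hps, hcomb, hzpow]
    _ = (-1 / (zeta n l0 : ℂ)) ^ N *
          ∏ j : Fin n, ((Real.sin (om n ((j:ℕ)+1)) : ℝ) : ℂ) ^ ((j:ℕ)+1) := by
        rw [div_pow]
        ring

/-- `det S = (−1/ζ)^{n(n+1)/2}·∏_{j=1}^n (sin ω_j)^j ≠ 0`, so the columns
`ξ_0, …, ξ_n` are linearly independent (form a basis of `ℂ^{n+1}`). -/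
theorem stmt9 (n : ℕ) (hn : 1 ≤ n) (l0 : ℂ) (hre : l0.re = 0) (him : l0.im ≠ 0) :
    (Smat n l0).det =
      (-1 / (zeta n l0 : ℂ)) ^ (n * (n + 1) / 2) *
        ∏ j : Fin n, ((Real.sin (om n ((j : ℕ) + 1)) : ℂ)) ^ ((j : ℕ) + 1) ∧
    (Smat n l0).det ≠ 0 ∧
    LinearIndependent ℂ (fun c : Idx n => (Smat n l0)ᵀ c) := by
  have hdet : (Smat n l0).det =
      (-1 / (zeta n l0 : ℂ)) ^ (n * (n + 1) / 2) *
        ∏ j : Fin n, ((Real.sin (om n ((j : ℕ) + 1)) : ℂ)) ^ ((j : ℕ) + 1) := by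
    rw [det_S hre him, prod_eval hn hre him]
  have hz : ((zeta n l0 : ℝ) : ℂ) ≠ 0 := by exact_mod_cast zeta_ne him
  have hne : (Smat n l0).det ≠ 0 := by
    rw [hdet]
    apply mul_ne_zero
    · apply pow_ne_zero
      rw [neg_div]
      exact neg_ne_zero.mpr (one_div_ne_zero hz)
    · exact Finset.prod_ne_zero_iff.mpr fun j _ => pow_ne_zero _
        (by exact_mod_cast sin_om_ne j)
  refine ⟨hdet, hne, ?_⟩
  exact Matrix.linearIndependent_cols_iff_isUnit.mpr
    ((Matrix.isUnit_iff_isUnit_det _).mpr hne.isUnit)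

end
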